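/- Let H ∈ ℝ^{n×n} be symmetric positive semidefinite and θ_⋆ ∈ ℝⁿ fixed. The function M(Λ) = −(1/2)·[θ_⋆ᵀΛθ_⋆ + log det(Λ⁻¹H + I)], defined on positive-definite diagonal matrices Λ = diag(λ₁, ..., λₙ) with λᵢ > 0, is concave in (λ₁, ..., λₙ). -/

import Mathlib

open Matrix Finset

section Aux

variable {n : ℕ}

private lemma psd_det_nonneg {m : Type*} [Fintype m] [DecidableEq m]
    {A : Matrix m m ℝ} (hA : A.PosSemidef) : 0 ≤ A.det := by
  rw [hA.isHermitian.det_eq_prod_eigenvalues]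
  exact Finset.prod_nonneg fun i _ => hA.eigenvalues_nonneg i

/-- The base matrix for subset `s`: rows in `s` are unit rows, others are rows of `H`. -/
private noncomputable def bmat (H : Matrix (Fin n) (Fin n) ℝ) (s : Finset (Fin n)) :
    Matrix (Fin n) (Fin n) ℝ :=
  fun i => if i ∈ s then Pi.single i 1 else H i

/-- The coefficient of the multilinear expansion. -/
private noncomputable def cf (H : Matrix (Fin n) (Fin n) ℝ) (s : Finset (Fin n)) : ℝ :=
  (bmat H s).det

private lemma cf_nonneg {H : Matrix (Fin n) (Fin n) ℝ} (hH : H.PosSemidef)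
    (s : Finset (Fin n)) : 0 ≤ cf H s := by
  classical
  set e : {i // i ∈ s} ⊕ {i // ¬ i ∈ s} ≃ Fin n := Equiv.sumCompl (· ∈ s)
  have hsub : (bmat H s).submatrix e e =
      Matrix.fromBlocks 1 0
        (H.submatrix (fun i : {i // ¬ i ∈ s} => (i : Fin n)) (fun j : {j // j ∈ s} => (j : Fin n)))
        (H.submatrix (fun i : {i // ¬ i ∈ s} => (i : Fin n))
          (fun j : {j // ¬ j ∈ s} => (j : Fin n))) := by
    ext i j
    cases i with
    | inl i =>
      cases j with
      | inl j =>
        simp only [submatrix_apply, e, Equiv.sumCompl_apply_inl, bmat, i.2, if_true,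
          fromBlocks_apply₁₁, Pi.single_apply, Matrix.one_apply]
        by_cases h : (i : Fin n) = (j : Fin n)
        · simp [h.symm, Subtype.ext h]
        · simp [Pi.single_apply, Subtype.ext_iff, h, Ne.symm h]
      | inr j =>
        simp only [submatrix_apply, e, Equiv.sumCompl_apply_inl, Equiv.sumCompl_apply_inr,
          bmat, i.2, if_true, fromBlocks_apply₁₂, Pi.single_apply, Matrix.zero_apply]
        have : (j : Fin n) ≠ (i : Fin n) := by
          intro h; exact j.2 (h ▸ i.2)
        simp [this]
    | inr i =>
      cases j with
      | inl j =>
        simp [e, bmat, i.2]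
      | inr j =>
        simp [e, bmat, i.2]
  have hdet : (bmat H s).det = ((bmat H s).submatrix e e).det :=
    (Matrix.det_submatrix_equiv_self e _).symm
  rw [cf, hdet, hsub, Matrix.det_fromBlocks_zero₁₂, Matrix.det_one, one_mul]
  exact psd_det_nonneg (hH.submatrix _)

private lemma cf_univ (H : Matrix (Fin n) (Fin n) ℝ) : cf H Finset.univ = 1 := by
  have : bmat H Finset.univ = 1 := by
    ext i j
    simp only [bmat, Finset.mem_univ, if_true, Pi.single_apply, Matrix.one_apply]
    by_cases h : i = j <;> simp [h, eq_comm]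
  rw [cf, this, Matrix.det_one]

/-- Multilinear expansion of `det (diagonal lam + H)`. -/
private lemma det_diagonal_add (H : Matrix (Fin n) (Fin n) ℝ) (lam : Fin n → ℝ) :
    (Matrix.diagonal lam + H).det
      = ∑ s : Finset (Fin n), (∏ i ∈ s, lam i) * cf H s := by
  classical
  have h0 : (Matrix.diagonal lam + H).det
      = (Matrix.detRowAlternating (R := ℝ) (n := Fin n)).toMultilinearMap
          ((fun i => (Matrix.diagonal lam) i) + fun i => H i) := rfl
  rw [h0, MultilinearMap.map_add_univ]
  refine Finset.sum_congr rfl fun s _ => ?_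
  have hpw : s.piecewise (fun i => (Matrix.diagonal lam) i) (fun i => H i)
      = s.piecewise (fun i => lam i • bmat H s i) (bmat H s) := by
    funext i
    by_cases hi : i ∈ s
    · simp only [Finset.piecewise_eq_of_mem _ _ _ hi, Finset.piecewise, if_pos hi]
      funext j
      simp [bmat, hi, Matrix.diagonal, Pi.single_apply, mul_comm, eq_comm]
    · simp only [Finset.piecewise_eq_of_notMem _ _ _ hi, Finset.piecewise, if_neg hi]
      simp [bmat, hi]
  rw [hpw]
  have := (Matrix.detRowAlternating (R := ℝ) (n := Fin n)).toMultilinearMap.map_piecewise_smul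
    (fun i => lam i) (bmat H s) s
  rw [this, smul_eq_mul]
  rfl

/-- The log-evidence determinant as a posynomial-type sum in the `lam i⁻¹`. -/
private noncomputable def Qf (H : Matrix (Fin n) (Fin n) ℝ) (lam : Fin n → ℝ) : ℝ :=
  ∑ s : Finset (Fin n), cf H s * ∏ i ∈ sᶜ, (lam i)⁻¹

private lemma det_eq_Qf (H : Matrix (Fin n) (Fin n) ℝ) {lam : Fin n → ℝ}
    (hlam : ∀ i, 0 < lam i) :
    ((Matrix.diagonal lam)⁻¹ * H + 1).det = Qf H lam := by
  classical
  have h1 : Matrix.diagonal (fun i => (lam i)⁻¹) * Matrix.diagonal lam = 1 := by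
    rw [Matrix.diagonal_mul_diagonal]
    have : (fun i => (lam i)⁻¹ * lam i) = fun _ => (1 : ℝ) := by
      funext i; exact inv_mul_cancel₀ (hlam i).ne'
    rw [this, Matrix.diagonal_one]
  have hinv : (Matrix.diagonal lam)⁻¹ = Matrix.diagonal (fun i => (lam i)⁻¹) :=
    Matrix.inv_eq_left_inv h1
  have h2 : (Matrix.diagonal lam)⁻¹ * H + 1
      = Matrix.diagonal (fun i => (lam i)⁻¹) * (H + Matrix.diagonal lam) := by
    rw [hinv, Matrix.mul_add, h1]
  rw [h2, Matrix.det_mul, Matrix.det_diagonal, add_comm H, det_diagonal_add, Finset.mul_sum]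
  refine Finset.sum_congr rfl fun s _ => ?_
  have hsplit : (∏ i, (lam i)⁻¹) = (∏ i ∈ s, (lam i)⁻¹) * ∏ i ∈ sᶜ, (lam i)⁻¹ :=
    (Finset.prod_mul_prod_compl s _).symm
  have hone : (∏ i ∈ s, (lam i)⁻¹) * (∏ i ∈ s, lam i) = 1 := by
    rw [← Finset.prod_mul_distrib]
    exact Finset.prod_eq_one fun i _ => inv_mul_cancel₀ (hlam i).ne'
  calc (∏ i, (lam i)⁻¹) * ((∏ i ∈ s, lam i) * cf H s)
      = ((∏ i ∈ s, (lam i)⁻¹) * (∏ i ∈ s, lam i)) * (cf H s * ∏ i ∈ sᶜ, (lam i)⁻¹) := by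
        rw [hsplit]; ring
    _ = cf H s * ∏ i ∈ sᶜ, (lam i)⁻¹ := by rw [hone, one_mul]

private lemma Qf_pos {H : Matrix (Fin n) (Fin n) ℝ} (hH : H.PosSemidef)
    {lam : Fin n → ℝ} (hlam : ∀ i, 0 < lam i) : 0 < Qf H lam := by
  refine Finset.sum_pos' (fun s _ => mul_nonneg (cf_nonneg hH s)
    (Finset.prod_nonneg fun i _ => (inv_pos.2 (hlam i)).le)) ?_
  refine ⟨Finset.univ, Finset.mem_univ _, ?_⟩
  rw [cf_univ]
  simp

private lemma convex_posOrthant :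
    Convex ℝ {lam : Fin n → ℝ | ∀ i, 0 < lam i} := by
  intro x hx y hy a b ha hb hab i
  rcases eq_or_lt_of_le ha with ha' | ha'
  · have hb1 : b = 1 := by linarith
    simpa [← ha', hb1] using hy i
  · have : 0 ≤ b * y i := mul_nonneg hb (hy i).le
    have := mul_pos ha' (hx i)
    simpa using by positivity

/-- Key lemma: log-convexity of `Qf` in `lam`, because `Qf` is a nonnegative combination of
log-convex functions `lam ↦ ∏ (lam i)⁻¹`. -/
private lemma Qf_mid {H : Matrix (Fin n) (Fin n) ℝ} (hH : H.PosSemidef)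
    {x y : Fin n → ℝ} (hx : ∀ i, 0 < x i) (hy : ∀ i, 0 < y i)
    {a b : ℝ} (ha : 0 < a) (hb : 0 < b) (hab : a + b = 1) :
    Qf H (a • x + b • y) ≤ Qf H x ^ a * Qf H y ^ b := by
  classical
  set A : Finset (Fin n) → ℝ := fun s => cf H s * ∏ i ∈ sᶜ, (x i)⁻¹ with hA
  set B : Finset (Fin n) → ℝ := fun s => cf H s * ∏ i ∈ sᶜ, (y i)⁻¹ with hB
  have hA0 : ∀ s, 0 ≤ A s := fun s => mul_nonneg (cf_nonneg hH s)
    (Finset.prod_nonneg fun i _ => (inv_pos.2 (hx i)).le)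
  have hB0 : ∀ s, 0 ≤ B s := fun s => mul_nonneg (cf_nonneg hH s)
    (Finset.prod_nonneg fun i _ => (inv_pos.2 (hy i)).le)
  have ha1 : a < 1 := by linarith
  -- termwise bound
  have hterm : ∀ s : Finset (Fin n),
      cf H s * ∏ i ∈ sᶜ, ((a • x + b • y) i)⁻¹ ≤ A s ^ a * B s ^ b := by
    intro s
    have hptw : ∀ i ∈ sᶜ, ((a • x + b • y) i)⁻¹ ≤ (x i)⁻¹ ^ a * (y i)⁻¹ ^ b := by
      intro i _
      have hgm : x i ^ a * y i ^ b ≤ a * x i + b * y i :=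
        Real.geom_mean_le_arith_mean2_weighted ha.le hb.le (hx i).le (hy i).le hab
      have hpos : 0 < x i ^ a * y i ^ b :=
        mul_pos (Real.rpow_pos_of_pos (hx i) a) (Real.rpow_pos_of_pos (hy i) b)
      have hle : (a * x i + b * y i)⁻¹ ≤ (x i ^ a * y i ^ b)⁻¹ :=
        inv_anti₀ hpos hgm
      calc ((a • x + b • y) i)⁻¹ = (a * x i + b * y i)⁻¹ := by simp
        _ ≤ (x i ^ a * y i ^ b)⁻¹ := hle
        _ = (x i)⁻¹ ^ a * (y i)⁻¹ ^ b := by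
            rw [mul_inv, Real.inv_rpow (hx i).le, Real.inv_rpow (hy i).le]
    have hprod : ∏ i ∈ sᶜ, ((a • x + b • y) i)⁻¹
        ≤ (∏ i ∈ sᶜ, (x i)⁻¹) ^ a * (∏ i ∈ sᶜ, (y i)⁻¹) ^ b := by
      calc ∏ i ∈ sᶜ, ((a • x + b • y) i)⁻¹
          ≤ ∏ i ∈ sᶜ, ((x i)⁻¹ ^ a * (y i)⁻¹ ^ b) := by
            refine Finset.prod_le_prod (fun i _ => ?_) hptw
            have : 0 < (a • x + b • y) i := by
              have := mul_pos ha (hx i); have := mul_pos hb (hy i)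
              simp only [Pi.add_apply, Pi.smul_apply, smul_eq_mul]; positivity
            exact (inv_pos.2 this).le
        _ = (∏ i ∈ sᶜ, (x i)⁻¹) ^ a * (∏ i ∈ sᶜ, (y i)⁻¹) ^ b := by
            rw [Finset.prod_mul_distrib,
              Real.finset_prod_rpow _ _ (fun i _ => (inv_pos.2 (hx i)).le),
              Real.finset_prod_rpow _ _ (fun i _ => (inv_pos.2 (hy i)).le)]
    have hcf : cf H s = cf H s ^ a * cf H s ^ b := by
      rcases (cf_nonneg hH s).eq_or_lt with hc | hc
      · rw [← hc, Real.zero_rpow ha.ne', zero_mul]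
      · rw [← Real.rpow_add hc, hab, Real.rpow_one]
    calc cf H s * ∏ i ∈ sᶜ, ((a • x + b • y) i)⁻¹
        ≤ cf H s * ((∏ i ∈ sᶜ, (x i)⁻¹) ^ a * (∏ i ∈ sᶜ, (y i)⁻¹) ^ b) :=
          mul_le_mul_of_nonneg_left hprod (cf_nonneg hH s)
      _ = (cf H s ^ a * (∏ i ∈ sᶜ, (x i)⁻¹) ^ a) * (cf H s ^ b * (∏ i ∈ sᶜ, (y i)⁻¹) ^ b) := by
          conv_lhs => rw [hcf]
          ring
      _ = A s ^ a * B s ^ b := by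
          rw [← Real.mul_rpow (cf_nonneg hH s) (Finset.prod_nonneg fun i _ => (inv_pos.2 (hx i)).le),
            ← Real.mul_rpow (cf_nonneg hH s) (Finset.prod_nonneg fun i _ => (inv_pos.2 (hy i)).le)]
  -- Hölder
  have hpq : Real.HolderConjugate a⁻¹ b⁻¹ :=
    Real.holderConjugate_iff.mpr ⟨((one_lt_inv₀ ha).2 ha1), by rw [inv_inv, inv_inv]; exact hab⟩
  have hholder := Real.inner_le_Lp_mul_Lq (Finset.univ (α := Finset (Fin n)))
    (fun s => A s ^ a) (fun s => B s ^ b) hpq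
  have hApow : ∀ s : Finset (Fin n), |A s ^ a| ^ a⁻¹ = A s := fun s => by
    rw [abs_of_nonneg (Real.rpow_nonneg (hA0 s) a), ← Real.rpow_mul (hA0 s),
      mul_inv_cancel₀ ha.ne', Real.rpow_one]
  have hBpow : ∀ s : Finset (Fin n), |B s ^ b| ^ b⁻¹ = B s := fun s => by
    rw [abs_of_nonneg (Real.rpow_nonneg (hB0 s) b), ← Real.rpow_mul (hB0 s),
      mul_inv_cancel₀ hb.ne', Real.rpow_one]
  have hrhs : (∑ s : Finset (Fin n), |A s ^ a| ^ a⁻¹) ^ (1 / a⁻¹)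
      * (∑ s : Finset (Fin n), |B s ^ b| ^ b⁻¹) ^ (1 / b⁻¹)
      = Qf H x ^ a * Qf H y ^ b := by
    simp only [hApow, hBpow, one_div, inv_inv]
    rfl
  calc Qf H (a • x + b • y) ≤ ∑ s : Finset (Fin n), A s ^ a * B s ^ b :=
        Finset.sum_le_sum fun s _ => hterm s
    _ ≤ _ := by simpa using hholder
    _ = Qf H x ^ a * Qf H y ^ b := hrhs

private lemma log_Qf_convex {H : Matrix (Fin n) (Fin n) ℝ} (hH : H.PosSemidef) :
    ConvexOn ℝ {lam : Fin n → ℝ | ∀ i, 0 < lam i} (fun lam => Real.log (Qf H lam)) := by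
  refine ⟨convex_posOrthant, ?_⟩
  intro x hx y hy a b ha hb hab
  rcases eq_or_lt_of_le ha with ha' | ha'
  · have hb1 : b = 1 := by linarith
    simp [← ha', hb1]
  rcases eq_or_lt_of_le hb with hb' | hb'
  · have ha1 : a = 1 := by linarith
    simp [← hb', ha1]
  have hxy : ∀ i, 0 < (a • x + b • y) i := convex_posOrthant hx hy ha hb hab
  have key := Qf_mid hH hx hy ha' hb' hab
  have hQx := Qf_pos hH hx
  have hQy := Qf_pos hH hy
  calc Real.log (Qf H (a • x + b • y)) ≤ Real.log (Qf H x ^ a * Qf H y ^ b) :=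
        Real.log_le_log (Qf_pos hH hxy) key
    _ = a * Real.log (Qf H x) + b * Real.log (Qf H y) := by
        rw [Real.log_mul (Real.rpow_pos_of_pos hQx a).ne' (Real.rpow_pos_of_pos hQy b).ne',
          Real.log_rpow hQx, Real.log_rpow hQy]
    _ = a • Real.log (Qf H x) + b • Real.log (Qf H y) := by simp [smul_eq_mul]

private lemma convexOn_congr {E : Type*} [AddCommMonoid E] [Module ℝ E] {s : Set E}
    {f g : E → ℝ} (hf : ConvexOn ℝ s f) (h : ∀ x ∈ s, f x = g x) : ConvexOn ℝ s g := by
  refine ⟨hf.1, fun x hx y hy a b ha hb hab => ?_⟩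
  rw [← h _ hx, ← h _ hy, ← h _ (hf.1 hx hy ha hb hab)]
  exact hf.2 hx hy ha hb hab

end Aux

/-- Concavity of the linearised Laplace log model evidence
`M(Λ) = -(1/2)[θ⋆ᵀΛθ⋆ + log det(Λ⁻¹H + I)]` in the diagonal prior precision entries. -/
theorem stmt_12 {n : ℕ}
    (H : Matrix (Fin n) (Fin n) ℝ) (hH : H.PosSemidef)
    (θs : Fin n → ℝ) :
    ConcaveOn ℝ {lam : Fin n → ℝ | ∀ i, 0 < lam i}
      (fun lam => -(1 / 2) * ((θs ⬝ᵥ (Matrix.diagonal lam *ᵥ θs))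
        + Real.log ((Matrix.diagonal lam)⁻¹ * H + 1).det)) := by
  classical
  set S : Set (Fin n → ℝ) := {lam : Fin n → ℝ | ∀ i, 0 < lam i} with hS
  -- the quadratic term is linear in `lam`
  have hlin : ConvexOn ℝ S (fun lam => θs ⬝ᵥ (Matrix.diagonal lam *ᵥ θs)) := by
    refine ⟨convex_posOrthant, fun x hx y hy a b ha hb hab => le_of_eq ?_⟩
    simp only [dotProduct, mulVec_diagonal, smul_eq_mul, Pi.add_apply, Pi.smul_apply,
      Finset.mul_sum, ← Finset.sum_add_distrib]
    exact Finset.sum_congr rfl fun i _ => by ring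
  -- the log-determinant term
  have hlog : ConvexOn ℝ S (fun lam => Real.log ((Matrix.diagonal lam)⁻¹ * H + 1).det) := by
    refine convexOn_congr (log_Qf_convex hH) fun lam hlam => ?_
    rw [det_eq_Qf H hlam]
  have hsum := hlin.add hlog
  have hsmul := hsum.smul (c := (1 : ℝ) / 2) (by norm_num)
  have hneg := hsmul.neg
  have hfun : (fun lam : Fin n → ℝ => -(1 / 2) * ((θs ⬝ᵥ (Matrix.diagonal lam *ᵥ θs))
        + Real.log ((Matrix.diagonal lam)⁻¹ * H + 1).det))
      = -fun lam : Fin n → ℝ => (1 / 2 : ℝ) • (((fun lam => θs ⬝ᵥ (Matrix.diagonal lam *ᵥ θs))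
        + fun lam => Real.log ((Matrix.diagonal lam)⁻¹ * H + 1).det) lam) := by
    funext lam
    simp only [Pi.neg_apply, Pi.add_apply, smul_eq_mul]
    ring
  rw [hfun]
  exact hneg
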